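/- Let k be a field of characteristic 2. The quotient ring A = k[[t,w]]/(w + (1+t)w² + t³) is isomorphic as a topological k-algebra to k[[t]], via the map sending t to t and w to s/(1+t), where s = Σ_{i≥0} (t³+t⁴)^{2^i}. -/

import Mathlib

open PowerSeries
noncomputable section

/-- The product (= `t`-adic) topology on `k[[t]]`, `k` being discrete. -/
def psTop (k : Type*) : TopologicalSpace (PowerSeries k) :=
  letI : TopologicalSpace k := ⊥
  inferInstanceAs (TopologicalSpace ((Unit →₀ ℕ) → k))

/-- The product (= `(t,w)`-adic) topology on `k[[t,w]] = k[[t]][[w]]`, `k` being discrete. -/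
def ps2Top (k : Type*) : TopologicalSpace (PowerSeries (PowerSeries k)) :=
  letI := psTop k
  inferInstanceAs (TopologicalSpace ((Unit →₀ ℕ) → PowerSeries k))

variable (k : Type*) [Field k]

/-- The relation `w + (1+t)w² + t³` in `k[[t,w]] = k[[t]][[w]]` (the variable `X` of the
outer ring is `w`, and `t` is the image of the variable of the inner ring `k[[t]]`). -/
def relF : PowerSeries (PowerSeries k) :=
  X + (1 + PowerSeries.C (R := PowerSeries k) X) * X ^ 2 + PowerSeries.C (R := PowerSeries k) X ^ 3

/-- The ring `A = k[[t,w]]/(w + (1+t)w² + t³)`. -/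
def NgA := PowerSeries (PowerSeries k) ⧸ Ideal.span {relF k}

instance : CommRing (NgA k) := Ideal.Quotient.commRing _
instance : Algebra k (NgA k) := Ideal.Quotient.algebra k

/-- The quotient topology on `A`. -/
def aTop : TopologicalSpace (NgA k) :=
  (ps2Top k).coinduced (Ideal.Quotient.mk (Ideal.span {relF k}))

/-- The image of `t` in `A`. -/
def tA : NgA k := Ideal.Quotient.mk _ (PowerSeries.C (R := PowerSeries k) X)

/-- The image of `w` in `A`. -/
def wA : NgA k := Ideal.Quotient.mk _ (X : PowerSeries (PowerSeries k))

/-- The power series `s = Σ_{i≥0} (t³+t⁴)^{2^i}` in `k[[t]]`, given coefficientwise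
(the term of index `i` has `t`-adic order `3·2^i > n` for `i > n`). -/
def paperS : PowerSeries k :=
  PowerSeries.mk fun n =>
    ∑ i ∈ Finset.range (n + 1), PowerSeries.coeff (R := k) n ((X ^ 3 + X ^ 4) ^ 2 ^ i)

/-! ### Auxiliary material for the proof -/

open Topology

set_option linter.unusedSectionVars false

namespace Ng
variable [CharP k 2]

theorem charPS : CharP (PowerSeries k) 2 :=
  charP_of_injective_ringHom (f := PowerSeries.C (R := k))
    (fun a b h => by simpa using congrArg (constantCoeff (R := k)) h) 2

local notation "cc" => (X ^ 3 + X ^ 4 : PowerSeries k)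
local notation "CC" => PowerSeries.C (R := PowerSeries k)

theorem X_pow_dvd_cc_pow (i : ℕ) : (X : PowerSeries k) ^ (3 * 2 ^ i) ∣ cc ^ 2 ^ i := by
  rw [pow_mul]
  exact pow_dvd_pow_of_dvd (dvd_add dvd_rfl ⟨X, by ring⟩) _

theorem coeff_cc_pow_eq_zero {n i : ℕ} (h : n ≤ i) : coeff (R := k) n (cc ^ 2 ^ i) = 0 := by
  refine X_pow_dvd_iff.mp (X_pow_dvd_cc_pow k i) n ?_
  calc n < 2 ^ n := Nat.lt_two_pow_self
    _ ≤ 2 ^ i := Nat.pow_le_pow_right (by norm_num) h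
    _ ≤ 3 * 2 ^ i := Nat.le_mul_of_pos_left _ (by norm_num)

/-- partial sums of `paperS` -/
def Sm (M : ℕ) : PowerSeries k := ∑ i ∈ Finset.range M, cc ^ 2 ^ i

theorem coeff_paperS_eq {n M : ℕ} (h : n < M) :
    coeff (R := k) n (paperS k) = coeff (R := k) n (Sm k M) := by
  rw [paperS, coeff_mk, Sm, map_sum]
  exact Finset.sum_subset (Finset.range_subset_range.mpr h)
    (fun i _ hi => coeff_cc_pow_eq_zero k (by simp at hi; omega))

theorem Sm_tel (M : ℕ) : Sm k M + Sm k M ^ 2 = cc + cc ^ 2 ^ M := by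
  haveI := charPS k
  induction M with
  | zero =>
    simp only [Sm, Finset.sum_range_zero, pow_zero, pow_one, zero_add, ne_eq]
    rw [zero_pow (by norm_num)]
    exact (CharTwo.add_self_eq_zero _).symm
  | succ M ih =>
    have h2 : (2 : PowerSeries k) = 0 := CharTwo.two_eq_zero
    have hsq : (cc ^ 2 ^ M) ^ 2 = cc ^ 2 ^ (M + 1) := by
      rw [← pow_mul, ← pow_succ]
    rw [show Sm k (M+1) = Sm k M + cc ^ 2 ^ M from Finset.sum_range_succ _ _,
      CharTwo.add_sq, hsq]
    linear_combination ih + (cc ^ 2 ^ M) * h2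

theorem paperS_sq : paperS k + paperS k ^ 2 = cc := by
  haveI := charPS k
  ext n
  have h1 : coeff (R := k) n (paperS k ^ 2) = coeff (R := k) n (Sm k (n+1) ^ 2) := by
    rw [pow_two, pow_two, coeff_mul, coeff_mul]
    refine Finset.sum_congr rfl fun p hp => ?_
    rw [Finset.HasAntidiagonal.mem_antidiagonal] at hp
    rw [coeff_paperS_eq k (show p.1 < n+1 by omega),
      coeff_paperS_eq k (show p.2 < n+1 by omega)]
  rw [map_add, h1, coeff_paperS_eq k (Nat.lt_succ_self n), ← map_add, Sm_tel,
    map_add, coeff_cc_pow_eq_zero k (Nat.le_succ n), add_zero]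

/-- the root `a₀ = s/(1+t)` -/
def aa : PowerSeries k := paperS k * (1 + X : PowerSeries k)⁻¹

theorem constantCoeff_paperS : constantCoeff (R := k) (paperS k) = 0 := by
  rw [← coeff_zero_eq_constantCoeff_apply, paperS, coeff_mk]
  simp

theorem X_dvd_aa : (X : PowerSeries k) ∣ aa k :=
  dvd_mul_of_dvd_left (X_dvd_iff.mpr (constantCoeff_paperS k)) _

theorem constantCoeff_aa : constantCoeff (R := k) (aa k) = 0 := X_dvd_iff.mp (X_dvd_aa k)

theorem coeff_aa_pow_mul {q j : ℕ} (h : q < j) (c : PowerSeries k) :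
    coeff (R := k) q (aa k ^ j * c) = 0 := by
  refine X_pow_dvd_iff.mp ?_ q h
  exact Dvd.dvd.mul_right (pow_dvd_pow_of_dvd (X_dvd_aa k) j) c

theorem one_add_X_ne : (1 + X : PowerSeries k) ≠ 0 := fun h => by
  have := congrArg (constantCoeff (R := k)) h
  simp at this

theorem hv : (1 + X : PowerSeries k) * (1 + X : PowerSeries k)⁻¹ = 1 :=
  PowerSeries.mul_inv_cancel _ (by simp)

theorem key : aa k + (1 + X) * aa k ^ 2 = X ^ 3 := by
  have hs := paperS_sq k
  have hv := hv k
  refine mul_left_cancel₀ (pow_ne_zero 2 (one_add_X_ne k)) ?_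
  rw [aa]
  linear_combination (1 + X : PowerSeries k) * hs +
    ((1+X) * paperS k + (1+X) * paperS k ^2 *
      ((1+X) * (1 + X : PowerSeries k)⁻¹ + 1)) * hv

/-- the unit cofactor of `X + C a₀` in `relF` -/
def UU : PowerSeries (PowerSeries k) :=
  CC (1 + (1 + X) * aa k) + CC (1 + X) * X

theorem charPS2 : CharP (PowerSeries (PowerSeries k)) 2 :=
  haveI := charPS k
  charP_of_injective_ringHom (f := CC)
    (fun a b h => by simpa using congrArg (constantCoeff (R := PowerSeries k)) h) 2

theorem hFact : relF k = (X + CC (aa k)) * UU k := by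
  haveI := charPS2 k
  have h2 : (2 : PowerSeries (PowerSeries k)) = 0 := CharTwo.two_eq_zero
  have hK' := congrArg CC (key k)
  simp only [map_add, map_mul, map_pow, map_one] at hK'
  rw [relF, UU]
  simp only [map_add, map_mul, map_pow, map_one]
  linear_combination -hK' - (CC (aa k) * (1 + CC X) * X) * h2

theorem hUnit : IsUnit (UU k) := by
  rw [PowerSeries.isUnit_iff_constantCoeff]
  have : constantCoeff (R := PowerSeries k) (UU k) = 1 + (1 + X) * aa k := by
    rw [UU]; simp
  rw [this, PowerSeries.isUnit_iff_constantCoeff]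
  simp [constantCoeff_aa k]

theorem span_eq : Ideal.span {relF k} = Ideal.span {X + CC (aa k)} := by
  rw [Ideal.span_singleton_eq_span_singleton]
  exact Associated.symm ⟨(hUnit k).unit, by rw [IsUnit.unit_spec]; exact (hFact k).symm⟩

/-- quotient coefficients of the division of `g` by `X + C a₀` -/
def hn (g : PowerSeries (PowerSeries k)) (n : ℕ) : PowerSeries k :=
  PowerSeries.mk fun m => ∑ j ∈ Finset.range (m + 1),
    coeff (R := k) m (aa k ^ j * coeff (R := PowerSeries k) (n + 1 + j) g)

theorem coeff_hn (g : PowerSeries (PowerSeries k)) (n : ℕ) {m M : ℕ} (h : m < M) :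
    coeff (R := k) m (hn k g n) =
      ∑ j ∈ Finset.range M, coeff (R := k) m (aa k ^ j * coeff (R := PowerSeries k) (n + 1 + j) g) := by
  rw [hn, coeff_mk]
  exact Finset.sum_subset (Finset.range_subset_range.mpr h)
    (fun j _ hj => coeff_aa_pow_mul k (by simp at hj; omega) _)

theorem coeff_aa_mul_hn (g : PowerSeries (PowerSeries k)) (n m : ℕ) :
    coeff (R := k) m (aa k * hn k g (n + 1)) =
      ∑ j ∈ Finset.range (m + 1),
        coeff (R := k) m (aa k ^ (j + 1) * coeff (R := PowerSeries k) (n + 2 + j) g) := by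
  rw [coeff_mul]
  have hstep : ∀ p ∈ Finset.HasAntidiagonal.antidiagonal m,
      coeff (R := k) p.1 (aa k) * coeff (R := k) p.2 (hn k g (n + 1)) =
      ∑ j ∈ Finset.range (m + 1), coeff (R := k) p.1 (aa k) *
        coeff (R := k) p.2 (aa k ^ j * coeff (R := PowerSeries k) (n + 2 + j) g) := by
    intro p hp
    rw [Finset.HasAntidiagonal.mem_antidiagonal] at hp
    rw [coeff_hn k g (n+1) (show p.2 < m + 1 by omega), Finset.mul_sum]
  rw [Finset.sum_congr rfl hstep, Finset.sum_comm]
  refine Finset.sum_congr rfl fun j _ => ?_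
  rw [← coeff_mul, ← mul_assoc, ← pow_succ']

theorem hTEL (g : PowerSeries (PowerSeries k)) (n : ℕ) :
    hn k g n = coeff (R := PowerSeries k) (n + 1) g + aa k * hn k g (n + 1) := by
  haveI := charPS k
  refine PowerSeries.ext fun m => ?_
  rw [map_add, coeff_aa_mul_hn, coeff_hn k g n (Nat.lt_succ_self m),
    Finset.sum_range_succ']
  have h0 : coeff (R := k) m (aa k ^ 0 * coeff (R := PowerSeries k) (n + 1 + 0) g)
      = coeff (R := k) m (coeff (R := PowerSeries k) (n + 1) g) := by
    rw [pow_zero, one_mul]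
  rw [h0, Finset.sum_range_succ,
    coeff_aa_pow_mul k (Nat.lt_succ_self m), add_zero, add_comm]
  congr 1
  exact Finset.sum_congr rfl fun j _ => by rw [show n + 1 + (j + 1) = n + 2 + j from by omega]

/-- remainder of the division of `g` by `X + C a₀` -/
def Efun (g : PowerSeries (PowerSeries k)) : PowerSeries k :=
  coeff (R := PowerSeries k) 0 g + aa k * hn k g 0

theorem hMAIN (g : PowerSeries (PowerSeries k)) :
    g = CC (Efun k g) + (X + CC (aa k)) * PowerSeries.mk (hn k g) := by
  haveI := charPS k
  refine PowerSeries.ext fun n => ?_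
  rcases n with _ | n
  · simp only [coeff_zero_eq_constantCoeff_apply, map_add, map_mul, constantCoeff_X,
      constantCoeff_C, constantCoeff_mk, zero_add]
    rw [Efun, add_assoc,
      show aa k * hn k g 0 + aa k * hn k g 0 = 0 from CharTwo.add_self_eq_zero _, add_zero]
    exact (coeff_zero_eq_constantCoeff_apply g).symm
  · rw [map_add, coeff_C, if_neg (Nat.succ_ne_zero n), zero_add, add_mul,
      map_add, coeff_succ_X_mul, coeff_C_mul, coeff_mk, coeff_mk]
    have h2 : (2 : PowerSeries k) = 0 := CharTwo.two_eq_zero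
    linear_combination -(hTEL k g n) - (aa k * hn k g (n + 1)) * h2

theorem hInj (f : PowerSeries k) (h : ∃ hq, CC f = (X + CC (aa k)) * hq) : f = 0 := by
  haveI := charPS k
  obtain ⟨hq, hCf⟩ := h
  have hrec : ∀ n, coeff (R := PowerSeries k) n hq = aa k * coeff (R := PowerSeries k) (n + 1) hq := by
    intro n
    have := congrArg (coeff (R := PowerSeries k) (n + 1)) hCf
    rw [coeff_C, if_neg (Nat.succ_ne_zero n), add_mul, map_add, coeff_succ_X_mul,
      coeff_C_mul] at this
    have h2 : (2 : PowerSeries k) = 0 := CharTwo.two_eq_zero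
    linear_combination -this - (aa k * coeff (R := PowerSeries k) (n+1) hq) * h2
  have hpow : ∀ m n, coeff (R := PowerSeries k) n hq = aa k ^ m * coeff (R := PowerSeries k) (n + m) hq := by
    intro m
    induction m with
    | zero => intro n; rw [pow_zero, one_mul, Nat.add_zero]
    | succ m ih =>
      intro n
      rw [hrec n, ih (n + 1), ← mul_assoc, ← pow_succ',
        show n + 1 + m = n + (m + 1) from by omega]
  have hq0 : ∀ n, coeff (R := PowerSeries k) n hq = 0 := by
    intro n
    ext j
    rw [hpow (j + 1) n, coeff_aa_pow_mul k (Nat.lt_succ_self j), map_zero]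
  have := congrArg (constantCoeff (R := PowerSeries k)) hCf
  rw [constantCoeff_C, map_mul, map_add, constantCoeff_X, zero_add, constantCoeff_C,
    ← coeff_zero_eq_constantCoeff_apply, hq0 0, mul_zero] at this
  exact this

/-- `X + C a₀` divides `g - C (Efun g)` -/
theorem mem_span (g : PowerSeries (PowerSeries k)) :
    PowerSeries.C (R := PowerSeries k) (Efun k g) - g ∈ Ideal.span {relF k} := by
  rw [span_eq k, Ideal.mem_span_singleton]
  exact ⟨-PowerSeries.mk (hn k g), by linear_combination -(hMAIN k g)⟩

/-- the algebra map `k[[t]] → A` -/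
def psi : PowerSeries k →ₐ[k] NgA k where
  toRingHom := (Ideal.Quotient.mk (Ideal.span {relF k})).comp (PowerSeries.C (R := PowerSeries k))
  commutes' r := by
    show Ideal.Quotient.mk (Ideal.span {relF k})
      (PowerSeries.C (R := PowerSeries k) (algebraMap k (PowerSeries k) r)) = _
    rw [← PowerSeries.algebraMap_apply, Ideal.Quotient.mk_algebraMap]
    rfl

theorem psi_bij : Function.Bijective (psi k) := by
  constructor
  · rw [injective_iff_map_eq_zero]
    intro f hf
    refine hInj k f ?_
    have : PowerSeries.C (R := PowerSeries k) f ∈ Ideal.span {relF k} :=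
      (Ideal.Quotient.eq_zero_iff_mem).mp hf
    rw [span_eq k, Ideal.mem_span_singleton] at this
    exact this
  · intro x
    obtain ⟨g, rfl⟩ := Ideal.Quotient.mk_surjective x
    exact ⟨Efun k g, Ideal.Quotient.eq.mpr (mem_span k g)⟩

/-- the isomorphism `k[[t]] ≃ A` -/
def EE : PowerSeries k ≃ₐ[k] NgA k := AlgEquiv.ofBijective (psi k) (psi_bij k)

theorem EE_apply (f : PowerSeries k) :
    EE k f = Ideal.Quotient.mk (Ideal.span {relF k}) (PowerSeries.C (R := PowerSeries k) f) := rfl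

theorem EE_Efun (g : PowerSeries (PowerSeries k)) :
    EE k (Efun k g) = Ideal.Quotient.mk (Ideal.span {relF k}) g := by
  rw [EE_apply]
  exact Ideal.Quotient.eq.mpr (mem_span k g)

/-! ### Topology -/

section Topo

variable {Y : Type*} [tY : TopologicalSpace Y]

theorem contPS_of_coeff (F : Y → PowerSeries k)
    (h : ∀ n, Continuous[tY, ⊥] fun x => coeff (R := k) n (F x)) :
    Continuous[tY, psTop k] F := by
  letI : TopologicalSpace k := ⊥
  refine continuous_pi fun d => ?_
  have hd : (fun x => F x d) = fun x => coeff (R := k) (d ()) (F x) := by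
    funext x
    conv_lhs => rw [Finsupp.unique_single d]
    rfl
  rw [hd]
  exact h (d ())

theorem contPS2_of_coeff (F : Y → PowerSeries (PowerSeries k))
    (h : ∀ n, Continuous[tY, psTop k] fun x => coeff (R := PowerSeries k) n (F x)) :
    Continuous[tY, ps2Top k] F := by
  letI := psTop k
  refine continuous_pi fun d => ?_
  have hd : (fun x => F x d) = fun x => coeff (R := PowerSeries k) (d ()) (F x) := by
    funext x
    conv_lhs => rw [Finsupp.unique_single d]
    rfl
  rw [hd]
  exact h (d ())

theorem cont_coeff (n : ℕ) : Continuous[psTop k, ⊥] (coeff (R := k) n) :=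
  letI : TopologicalSpace k := ⊥
  continuous_apply (Finsupp.single () n)

theorem cont_coeff2 (n : ℕ) : Continuous[ps2Top k, psTop k] (coeff (R := PowerSeries k) n) :=
  letI := psTop k
  continuous_apply (Finsupp.single () n)

theorem cont_coeff_mul_const (a : PowerSeries k) (m : ℕ) :
    Continuous[psTop k, ⊥] fun f => coeff (R := k) m (a * f) := by
  letI : TopologicalSpace k := ⊥
  haveI : DiscreteTopology k := ⟨rfl⟩
  letI := psTop k
  have hd : (fun f => coeff (R := k) m (a * f)) =
      fun f => ∑ p ∈ Finset.HasAntidiagonal.antidiagonal m, coeff (R := k) p.1 a * coeff (R := k) p.2 f := by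
    funext f; rw [coeff_mul]
  rw [hd]
  exact continuous_finset_sum _ fun p _ => continuous_const.mul (cont_coeff k p.2)

theorem cont_hn0 : Continuous[ps2Top k, psTop k] fun g => hn k g 0 := by
  letI : TopologicalSpace k := ⊥
  haveI : DiscreteTopology k := ⟨rfl⟩
  letI := psTop k
  letI := ps2Top k
  refine contPS_of_coeff k _ fun m => ?_
  have hd : (fun g => coeff (R := k) m (hn k g 0)) = fun g => ∑ j ∈ Finset.range (m + 1),
      coeff (R := k) m (aa k ^ j * coeff (R := PowerSeries k) (0 + 1 + j) g) := by
    funext g; rw [hn, coeff_mk]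
  rw [hd]
  exact continuous_finset_sum _ fun j _ =>
    (cont_coeff_mul_const k (aa k ^ j) m).comp (cont_coeff2 k (0 + 1 + j))

theorem cont_Efun : Continuous[ps2Top k, psTop k] (Efun k) := by
  letI : TopologicalSpace k := ⊥
  haveI : DiscreteTopology k := ⟨rfl⟩
  letI := psTop k
  letI := ps2Top k
  refine contPS_of_coeff k _ fun n => ?_
  have hd : (fun g => coeff (R := k) n (Efun k g)) = fun g =>
      coeff (R := k) n (coeff (R := PowerSeries k) 0 g) + coeff (R := k) n (aa k * hn k g 0) := by
    funext g; rw [Efun, map_add]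
  rw [hd]
  exact ((cont_coeff k n).comp (cont_coeff2 k 0)).add
    ((cont_coeff_mul_const k (aa k) n).comp (cont_hn0 k))

theorem cont_C2 : Continuous[psTop k, ps2Top k] (PowerSeries.C (R := PowerSeries k)) := by
  letI : TopologicalSpace k := ⊥
  haveI : DiscreteTopology k := ⟨rfl⟩
  letI := psTop k
  letI := ps2Top k
  refine contPS2_of_coeff k _ fun n => ?_
  rcases n with _ | n
  · have hd : (fun f : PowerSeries k => coeff (R := PowerSeries k) 0 (PowerSeries.C f)) = id := by
      funext f; rw [coeff_zero_C]; rfl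
    rw [hd]; exact continuous_id
  · have hd : (fun f : PowerSeries k => coeff (R := PowerSeries k) (n+1) (PowerSeries.C f)) =
        fun _ => 0 := by
      funext f; rw [coeff_C, if_neg (Nat.succ_ne_zero n)]
    rw [hd]; exact continuous_const

end Topo

end Ng

/-- for `k` of characteristic 2, the quotient `A = k[[t,w]]/(w + (1+t)w² + t³)`
is isomorphic as a topological `k`-algebra to `k[[t]]` via a map sending `t` to `t` and
`w` to `s/(1+t)`, where `s = Σ_{i≥0} (t³+t⁴)^{2^i}`. -/
theorem NgA_iso_powerSeries [CharP k 2] :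
    letI := psTop k
    letI := aTop k
    ∃ e : NgA k ≃ₐ[k] PowerSeries k,
      Continuous e ∧ Continuous e.symm ∧
        e (tA k) = X ∧ e (wA k) = paperS k * (1 + X : PowerSeries k)⁻¹ := by
  letI := psTop k
  letI := aTop k
  letI := ps2Top k
  refine ⟨(Ng.EE k).symm, ?_, ?_, ?_, ?_⟩
  · -- continuity of e
    refine continuous_coinduced_dom.mpr ?_
    have hd : (⇑(Ng.EE k).symm ∘ Ideal.Quotient.mk (Ideal.span {relF k}))
        = Ng.Efun k := by
      funext g
      show (Ng.EE k).symm (Ideal.Quotient.mk (Ideal.span {relF k}) g) = Ng.Efun k g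
      rw [← Ng.EE_Efun k g, AlgEquiv.symm_apply_apply]
    rw [hd]
    exact Ng.cont_Efun k
  · -- continuity of e.symm
    rw [AlgEquiv.symm_symm]
    have hd : ⇑(Ng.EE k) = (Ideal.Quotient.mk (Ideal.span {relF k})) ∘
        (PowerSeries.C (R := PowerSeries k)) := rfl
    rw [hd]
    exact Continuous.comp continuous_coinduced_rng (Ng.cont_C2 k)
  · -- t ↦ t
    rw [AlgEquiv.symm_apply_eq]
    rfl
  · -- w ↦ s/(1+t)
    rw [AlgEquiv.symm_apply_eq]
    show wA k = Ideal.Quotient.mk _ (PowerSeries.C (R := PowerSeries k) (Ng.aa k))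
    refine (Ideal.Quotient.eq.mpr ?_).symm
    haveI := Ng.charPS2 k
    rw [Ng.span_eq k, Ideal.mem_span_singleton, CharTwo.sub_eq_add]
    exact ⟨1, by ring⟩
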